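/- arXiv:2208.13359 — 2 statements merged into one kernel-verified Lean document; each statement's English description precedes it below -/
import Mathlib

section
/- Let A ≠ 0, B < 0, D₁ be real constants. On an interval where cos(√(-B)(Ax + D₁)) ≠ 0, the function t(x) = √(-B)·tan(√(-B)(Ax + D₁)) satisfies t'(x) = A·(t(x)² - B). -/
theorem ode_case_B_neg (A B D₁ : ℝ) (hA : A ≠ 0) (hB : B < 0) :
    ∀ x : ℝ, Real.cos (Real.sqrt (-B) * (A * x + D₁)) ≠ 0 →
      HasDerivAt (fun x : ℝ =>
          Real.sqrt (-B) * Real.tan (Real.sqrt (-B) * (A * x + D₁)))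
        (A * ((Real.sqrt (-B) * Real.tan (Real.sqrt (-B) * (A * x + D₁))) ^ 2 - B)) x := by
  intro x hcos
  have hBpos : (0:ℝ) ≤ -B := by linarith
  have hsq : Real.sqrt (-B) * Real.sqrt (-B) = -B := Real.mul_self_sqrt hBpos
  have h1 : HasDerivAt (fun x : ℝ => Real.sqrt (-B) * (A * x + D₁)) (Real.sqrt (-B) * A) x := by
    have := ((hasDerivAt_id x).const_mul A).add_const D₁
    simpa using this.const_mul (Real.sqrt (-B))
  have h2 := (Real.hasDerivAt_tan hcos).comp x h1
  have h3 := h2.const_mul (Real.sqrt (-B))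
  refine h3.congr_deriv (Eq.symm ?_)
  have : (1:ℝ)/ Real.cos (Real.sqrt (-B) * (A * x + D₁)) ^ 2
      = 1 + Real.tan (Real.sqrt (-B) * (A * x + D₁)) ^ 2 := by
    rw [Real.tan_eq_sin_div_cos, div_pow, ← Real.sin_sq_add_cos_sq (Real.sqrt (-B) * (A * x + D₁))]
    field_simp
    rw [Real.sin_sq_add_cos_sq]
    linarith [Real.sin_sq_add_cos_sq (Real.sqrt (-B) * (A * x + D₁))]
  rw [this]
  ring_nf
  rw [Real.sq_sqrt hBpos]
  ring
end

section
/- Let p > 0 be differentiable, H, K differentiable functions of x with H² - K + c > 0, e^u = 4p, and suppose there exists A ≠ 0 such that e^u √(H²-K+c) = e^{A x + A₂} along a trajectory where K satisfies x = (1/2)ln[(K₁-K)^σ(K-K₂)^β(K+K₁+K₂)^γ] + c₁ with σβγ as usual. If additionally H is constant, then H² = (e^{2A₂}/(16p²))·[(K₁-K)^σ(K-K₂)^β(K+K₁+K₂)^γ]^A + K - c for all K in the range, which is impossible for a constant H since the right-hand side is a nonconstant function of K. Conclude: the mean curvature H of a Weingarten HCMU surface without umbilical points in Q³_c is not constant.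 -/
set_option maxHeartbeats 1000000 in
theorem mean_curvature_not_constant (K₁ K₂ c A A₂ H : ℝ)
    (h1 : K₁ > 0) (h2 : K₁ > K₂) (h3 : K₂ > -(K₁ + K₂)) (hA : A ≠ 0)
    (p : ℝ → ℝ) (hp : ∀ K, p K = -(1/3) * (K - K₁) * (K - K₂) * (K + K₁ + K₂))
    (σ β γ : ℝ)
    (hσ : σ = -3 / ((K₁ - K₂) * (K₂ + 2 * K₁)))
    (hβ : β = -3 / ((K₂ - K₁) * (2 * K₂ + K₁)))
    (hγ : γ = -3 / ((K₂ + 2 * K₁) * (2 * K₂ + K₁)))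
    (Φ : ℝ → ℝ)
    (hΦ : ∀ K, Φ K = (K₁ - K) ^ σ * (K - K₂) ^ β * (K + K₁ + K₂) ^ γ)
    (heq : ∀ K ∈ Set.Ioo K₂ K₁,
      H ^ 2 - K + c = Real.exp (2 * A₂) / (16 * (p K) ^ 2) * (Φ K) ^ A) :
    False := by
  have hd1 : K₁ - K₂ ≠ 0 := by intro h; linarith [sub_eq_zero.mp h]
  have hd2 : K₂ + 2 * K₁ ≠ 0 := by intro h; linarith
  have hd3 : K₂ - K₁ ≠ 0 := by intro h; linarith [sub_eq_zero.mp h]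
  have hd4 : 2 * K₂ + K₁ ≠ 0 := by intro h; linarith
  have hsum : σ + β + γ = 0 := by
    rw [hσ, hβ, hγ, div_add_div _ _ (mul_ne_zero hd1 hd2) (mul_ne_zero hd3 hd4),
      div_add_div _ _ (mul_ne_zero (mul_ne_zero hd1 hd2) (mul_ne_zero hd3 hd4)) (mul_ne_zero hd2 hd4),
      div_eq_zero_iff]
    left; ring
  -- the log identity on the interval
  have hlog : ∀ y ∈ Set.Ioo K₂ K₁,
      Real.log (H^2 + c - y)
        - (A*σ - 2) * Real.log (K₁ - y)
        - (A*β - 2) * Real.log (y - K₂)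
        - (A*γ - 2) * Real.log (y + K₁ + K₂)
      = 2*A₂ - Real.log 16 - 2*Real.log (1/3) := by
    intro y hy
    obtain ⟨hy1, hy2⟩ := hy
    have ha : (0:ℝ) < K₁ - y := by linarith
    have hb : (0:ℝ) < y - K₂ := by linarith
    have hd : (0:ℝ) < y + K₁ + K₂ := by linarith
    have hbd : (0:ℝ) < (y - K₂) * (y + K₁ + K₂) := mul_pos hb hd
    have habd : (0:ℝ) < (K₁ - y) * ((y - K₂) * (y + K₁ + K₂)) := mul_pos ha hbd
    have hpy : p y = 1/3 * ((K₁ - y) * ((y - K₂) * (y + K₁ + K₂))) := by rw [hp]; ring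
    have hppos : (0:ℝ) < p y := by rw [hpy]; positivity
    have hΦpos : (0:ℝ) < Φ y := by
      rw [hΦ]
      exact mul_pos (mul_pos (Real.rpow_pos_of_pos ha σ) (Real.rpow_pos_of_pos hb β))
        (Real.rpow_pos_of_pos hd γ)
    have h16p : (0:ℝ) < 16 * p y ^ 2 := by positivity
    have hDeq : H^2 + c - y = Real.exp (2*A₂) / (16 * p y ^ 2) * Φ y ^ A := by
      have := heq y ⟨hy1, hy2⟩; linarith
    have e1 : Real.log (Real.exp (2*A₂) / (16 * p y ^ 2) * Φ y ^ A)
        = 2*A₂ - (Real.log 16 + 2 * Real.log (p y)) + A * Real.log (Φ y) := by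
      rw [Real.log_mul (div_pos (Real.exp_pos _) h16p).ne' (Real.rpow_pos_of_pos hΦpos A).ne',
          Real.log_div (Real.exp_ne_zero _) h16p.ne', Real.log_exp,
          Real.log_rpow hΦpos,
          Real.log_mul (by norm_num : (16:ℝ) ≠ 0) (pow_ne_zero 2 hppos.ne'),
          Real.log_pow]
      push_cast; ring
    have e2 : Real.log (p y) = Real.log (1/3)
        + (Real.log (K₁ - y) + (Real.log (y - K₂) + Real.log (y + K₁ + K₂))) := by
      rw [hpy, Real.log_mul (by norm_num : (1/3:ℝ) ≠ 0) habd.ne',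
          Real.log_mul ha.ne' hbd.ne', Real.log_mul hb.ne' hd.ne']
    have e3 : Real.log (Φ y) = σ * Real.log (K₁ - y) + β * Real.log (y - K₂)
        + γ * Real.log (y + K₁ + K₂) := by
      rw [hΦ,
          Real.log_mul (mul_pos (Real.rpow_pos_of_pos ha σ) (Real.rpow_pos_of_pos hb β)).ne'
            (Real.rpow_pos_of_pos hd γ).ne',
          Real.log_mul (Real.rpow_pos_of_pos ha σ).ne' (Real.rpow_pos_of_pos hb β).ne',
          Real.log_rpow ha, Real.log_rpow hb, Real.log_rpow hd]
    rw [hDeq, e1]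
    linear_combination (-2:ℝ) * e2 + A * e3
  -- the polynomial identity from differentiating
  have key : ∀ x ∈ Set.Ioo K₂ K₁,
      (K₁ - x) * ((x - K₂) * (x + K₁ + K₂)) =
      (H^2 + c - x) * ((A*σ - 2) * ((x - K₂) * (x + K₁ + K₂))
        - (A*β - 2) * ((K₁ - x) * (x + K₁ + K₂))
        - (A*γ - 2) * ((K₁ - x) * (x - K₂))) := by
    intro x hx
    obtain ⟨hx1, hx2⟩ := hx
    have ha : (0:ℝ) < K₁ - x := by linarith
    have hb : (0:ℝ) < x - K₂ := by linarith
    have hd : (0:ℝ) < x + K₁ + K₂ := by linarith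
    have hpy : p x = 1/3 * ((K₁ - x) * ((x - K₂) * (x + K₁ + K₂))) := by rw [hp]; ring
    have hppos : (0:ℝ) < p x := by rw [hpy]; positivity
    have hΦpos : (0:ℝ) < Φ x := by
      rw [hΦ]
      exact mul_pos (mul_pos (Real.rpow_pos_of_pos ha σ) (Real.rpow_pos_of_pos hb β))
        (Real.rpow_pos_of_pos hd γ)
    have hDpos : (0:ℝ) < H^2 + c - x := by
      have hDeq : H^2 + c - x = Real.exp (2*A₂) / (16 * p x ^ 2) * Φ x ^ A := by
        have := heq x ⟨hx1, hx2⟩; linarith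
      rw [hDeq]
      exact mul_pos (div_pos (Real.exp_pos _) (by positivity)) (Real.rpow_pos_of_pos hΦpos A)
    have m1 : HasDerivAt (fun y : ℝ => H^2 + c - y) (0 - 1) x :=
      (hasDerivAt_const x (H^2 + c)).sub (hasDerivAt_id x)
    have m2 : HasDerivAt (fun y : ℝ => K₁ - y) (0 - 1) x :=
      (hasDerivAt_const x K₁).sub (hasDerivAt_id x)
    have m3 : HasDerivAt (fun y : ℝ => y - K₂) 1 x := (hasDerivAt_id x).sub_const K₂
    have m4 : HasDerivAt (fun y : ℝ => y + K₁ + K₂) 1 x :=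
      ((hasDerivAt_id x).add_const K₁).add_const K₂
    have L1 := m1.log hDpos.ne'
    have L2 := m2.log ha.ne'
    have L3 := m3.log hb.ne'
    have L4 := m4.log hd.ne'
    have hG : HasDerivAt (fun y : ℝ => Real.log (H^2 + c - y)
        - (A*σ - 2) * Real.log (K₁ - y)
        - (A*β - 2) * Real.log (y - K₂)
        - (A*γ - 2) * Real.log (y + K₁ + K₂))
        ((0 - 1)/(H^2 + c - x) - (A*σ - 2) * ((0 - 1)/(K₁ - x))
          - (A*β - 2) * (1/(x - K₂)) - (A*γ - 2) * (1/(x + K₁ + K₂))) x :=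
      ((L1.sub (L2.const_mul _)).sub (L3.const_mul _)).sub (L4.const_mul _)
    have hev : (fun y : ℝ => Real.log (H^2 + c - y)
        - (A*σ - 2) * Real.log (K₁ - y)
        - (A*β - 2) * Real.log (y - K₂)
        - (A*γ - 2) * Real.log (y + K₁ + K₂))
        =ᶠ[nhds x] (fun _ : ℝ => 2*A₂ - Real.log 16 - 2*Real.log (1/3)) := by
      filter_upwards [Ioo_mem_nhds hx1 hx2] with y hy using hlog y hy
    have hG0 : HasDerivAt (fun _ : ℝ => 2*A₂ - Real.log 16 - 2*Real.log (1/3))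
        ((0 - 1)/(H^2 + c - x) - (A*σ - 2) * ((0 - 1)/(K₁ - x))
          - (A*β - 2) * (1/(x - K₂)) - (A*γ - 2) * (1/(x + K₁ + K₂))) x :=
      hG.congr_of_eventuallyEq hev.symm
    have hz : (0 - 1)/(H^2 + c - x) - (A*σ - 2) * ((0 - 1)/(K₁ - x))
          - (A*β - 2) * (1/(x - K₂)) - (A*γ - 2) * (1/(x + K₁ + K₂)) = 0 :=
      hG0.unique (hasDerivAt_const x _)
    field_simp at hz
    linear_combination (-1 : ℝ) * hz
  -- evaluate the cubic identity at four equally spaced points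
  set h : ℝ := (K₁ - K₂) / 8 with hh
  have hhpos : 0 < h := by rw [hh]; linarith
  have mem : ∀ i : ℝ, 2 ≤ i → i ≤ 5 → K₂ + i * h ∈ Set.Ioo K₂ K₁ := by
    intro i hi1 hi2
    constructor
    · nlinarith
    · nlinarith [hhpos]
  have e0 := key (K₂ + 2 * h) (mem 2 (by norm_num) (by norm_num))
  have e1 := key (K₂ + 3 * h) (mem 3 (by norm_num) (by norm_num))
  have e2 := key (K₂ + 4 * h) (mem 4 (by norm_num) (by norm_num))
  have e3 := key (K₂ + 5 * h) (mem 5 (by norm_num) (by norm_num))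
  have hdiff : (7 - A * (σ + β + γ)) * (6 * h^3) = 0 := by
    linear_combination e0 - 3 * e1 + 3 * e2 - e3
  rw [hsum] at hdiff
  have h42 : (42:ℝ) * h^3 = 0 := by linear_combination hdiff
  have hp3 : (0:ℝ) < h ^ 3 := pow_pos hhpos 3
  linarith
end
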